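/- Let d ∈ ℕ, let B be a d×d complex matrix and β > 0 such that ‖exp(t·B)‖ ≤ β for all t ≥ 0. Let x₀ ∈ ℝ, q : [x₀,∞) → ℝ continuous with q ≥ 0, S(x) = ∫_{x₀}^x q(t) dt, and A : [x₀,∞) → Matrix d d ℂ continuous with ρ̄ := β·∫_{x₀}^∞ ‖A(y)‖ dy < ∞. For a bounded continuous U : [x₀,∞) → ℂ^d define K[U](x) = ∫_x^∞ exp(−(S(x)−S(y))·B)·A(y)·U(y) dy. Then K[U] is a well-defined bounded continuous function, and for every n ≥ 1 the n-th iterate satisfies sup_{x ≥ x₀} ‖Kⁿ[U](x)‖ ≤ (ρ̄ⁿ/n!)·sup_{x ≥ x₀} ‖U(x)‖. -/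

import Mathlib

open MeasureTheory

attribute [local instance] Matrix.linftyOpNormedAddCommGroup Matrix.linftyOpNormedRing
  Matrix.linftyOpNormedAlgebra

lemma vob_primitive_contOn {E : Type*} [NormedAddCommGroup E] [NormedSpace ℝ E]
    {h : ℝ → E} {x₀ : ℝ} (hint : ∀ b, IntegrableOn h (Set.Icc x₀ b)) :
    ContinuousOn (fun x => ∫ t in x₀..x, h t) (Set.Ici x₀) := by
  intro x hx
  have h0 : ContinuousOn (fun u => ∫ t in Set.Ioc x₀ u, h t) (Set.Icc x₀ (x + 1)) :=
    intervalIntegral.continuousOn_primitive (hint (x+1))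
  have h1 : ContinuousOn (fun u => ∫ t in x₀..u, h t) (Set.Icc x₀ (x + 1)) :=
    h0.congr (fun u hu => intervalIntegral.integral_of_le hu.1)
  have hmem : Set.Icc x₀ (x+1) ∈ nhdsWithin x (Set.Ici x₀) := by
    apply Filter.mem_of_superset
      (Filter.inter_mem self_mem_nhdsWithin
        (nhdsWithin_le_nhds (Iio_mem_nhds (by linarith : x < x + 1))))
    rintro u ⟨h1, h2⟩
    exact ⟨h1, le_of_lt h2⟩
  exact (h1 x ⟨hx, by linarith⟩).mono_of_mem_nhdsWithin hmem

lemma vob_integral_Ici_split {E : Type*} [NormedAddCommGroup E] [NormedSpace ℝ E]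
    (h : ℝ → E) {x₀ x : ℝ} (hx : x₀ ≤ x) (hint : IntegrableOn h (Set.Ici x₀)) :
    (∫ y in Set.Ici x, h y) = (∫ y in Set.Ici x₀, h y) - ∫ t in x₀..x, h t := by
  rw [integral_Ici_eq_integral_Ioi, integral_Ici_eq_integral_Ioi,
    intervalIntegral.integral_of_le hx]
  have : (∫ y in Set.Ioi x₀, h y) = (∫ t in Set.Ioc x₀ x, h t) + ∫ y in Set.Ioi x, h y := by
    rw [← setIntegral_union (Set.Ioc_disjoint_Ioi le_rfl) measurableSet_Ioi
      (hint.mono_set (Set.Ioc_subset_Icc_self.trans (Set.Icc_subset_Ici_self)))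
      (hint.mono_set (fun y hy => le_trans hx (le_of_lt hy))),
      Set.Ioc_union_Ioi_eq_Ioi hx]
  rw [this]; abel

lemma vob_contOn_integral_Ici {E : Type*} [NormedAddCommGroup E] [NormedSpace ℝ E]
    {h : ℝ → E} {x₀ : ℝ} (hint : IntegrableOn h (Set.Ici x₀)) :
    ContinuousOn (fun x => ∫ y in Set.Ici x, h y) (Set.Ici x₀) := by
  have : ∀ x ∈ Set.Ici x₀, (∫ y in Set.Ici x, h y)
      = (∫ y in Set.Ici x₀, h y) - ∫ t in x₀..x, h t :=
    fun x hx => vob_integral_Ici_split h hx hint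
  apply ContinuousOn.congr _ this
  exact continuousOn_const.sub
    (vob_primitive_contOn (fun b => hint.mono_set Set.Icc_subset_Ici_self))

/-- the Volterra integral operator
`K[U](x) = ∫_x^∞ exp(−(S(x)−S(y))·B)·A(y)·U(y) dy` is well defined on bounded
continuous functions and its iterates satisfy the factorial bound
`sup ‖Kⁿ[U]‖ ≤ (ρ̄ⁿ/n!)·sup ‖U‖`. -/
theorem volterra_operator_iterate_bound
    (d : ℕ) (B : Matrix (Fin d) (Fin d) ℂ) (β : ℝ) (hβ : 0 < β)
    (hB : ∀ t : ℝ, 0 ≤ t → ‖NormedSpace.exp (t • B)‖ ≤ β)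
    (x₀ : ℝ) (q : ℝ → ℝ) (hq : ContinuousOn q (Set.Ici x₀))
    (hq0 : ∀ x ∈ Set.Ici x₀, 0 ≤ q x)
    (S : ℝ → ℝ) (hS : ∀ x : ℝ, S x = ∫ t in x₀..x, q t)
    (A : ℝ → Matrix (Fin d) (Fin d) ℂ) (hA : ContinuousOn A (Set.Ici x₀))
    (hAint : IntegrableOn (fun y => ‖A y‖) (Set.Ici x₀))
    (ρ : ℝ) (hρ : ρ = β * ∫ y in Set.Ici x₀, ‖A y‖)
    (K : (ℝ → (Fin d → ℂ)) → (ℝ → (Fin d → ℂ)))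
    (hK : ∀ U : ℝ → (Fin d → ℂ), ∀ x : ℝ, K U x =
      ∫ y in Set.Ici x, (NormedSpace.exp (-(S x - S y) • B)).mulVec
        ((A y).mulVec (U y))) :
    ∀ U : ℝ → (Fin d → ℂ), ContinuousOn U (Set.Ici x₀) →
      (∃ C : ℝ, ∀ x ∈ Set.Ici x₀, ‖U x‖ ≤ C) →
      -- the integral defining K[U] converges
      (∀ x ∈ Set.Ici x₀, IntegrableOn
        (fun y => (NormedSpace.exp (-(S x - S y) • B)).mulVec
          ((A y).mulVec (U y))) (Set.Ici x)) ∧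
      -- K[U] is bounded and continuous
      ContinuousOn (K U) (Set.Ici x₀) ∧
      (∃ C : ℝ, ∀ x ∈ Set.Ici x₀, ‖K U x‖ ≤ C) ∧
      -- factorial bound for the iterates
      (∀ n : ℕ, 1 ≤ n →
        (⨆ x : Set.Ici x₀, ‖(K^[n] U) (x : ℝ)‖) ≤
          ρ ^ n / (n.factorial : ℝ) * ⨆ x : Set.Ici x₀, ‖U (x : ℝ)‖) := by
  intro U hUcont hUbd
  haveI : Nonempty (Set.Ici x₀) := ⟨⟨x₀, le_refl x₀⟩⟩
  set g : ℝ → ℝ := fun x => ∫ y in Set.Ici x, ‖A y‖ with hgdef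
  have hAnorm : ContinuousOn (fun y => ‖A y‖) (Set.Ici x₀) := hA.norm
  have hg0 : ∀ x, 0 ≤ g x :=
    fun x => setIntegral_nonneg measurableSet_Ici (fun y _ => norm_nonneg _)
  have hganti : ∀ x y, x₀ ≤ x → x ≤ y → g y ≤ g x := by
    intro x y hx hxy
    exact setIntegral_mono_set (hAint.mono_set (Set.Ici_subset_Ici.2 hx))
      (Filter.Eventually.of_forall (fun y => norm_nonneg _))
      ((Set.Ici_subset_Ici.2 hxy).eventuallyLE)
  have hgcont : ContinuousOn g (Set.Ici x₀) := vob_contOn_integral_Ici hAint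
  have hρg : ρ = β * g x₀ := hρ
  have hρ0 : 0 ≤ ρ := by rw [hρg]; exact mul_nonneg hβ.le (hg0 _)
  have hβg : ∀ x ∈ Set.Ici x₀, β * g x ≤ ρ := by
    intro x hx
    rw [hρg]
    exact mul_le_mul_of_nonneg_left (hganti x₀ x le_rfl hx) hβ.le
  -- facts about S
  have hqIcc : ∀ b, IntegrableOn q (Set.Icc x₀ b) :=
    fun b => (hq.mono Set.Icc_subset_Ici_self).integrableOn_compact isCompact_Icc
  have hScont : ContinuousOn S (Set.Ici x₀) :=
    (vob_primitive_contOn hqIcc).congr (fun x _ => hS x)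
  have hSx₀ : S x₀ = 0 := by rw [hS]; simp
  have hSmono : ∀ x y, x₀ ≤ x → x ≤ y → S x ≤ S y := by
    intro x y hx hxy
    have I1 : IntervalIntegrable q volume x₀ x := by
      rw [intervalIntegrable_iff_integrableOn_Icc_of_le (f := q) hx]; exact hqIcc x
    have I2 : IntervalIntegrable q volume x y := by
      rw [intervalIntegrable_iff_integrableOn_Icc_of_le (f := q) hxy]
      exact (hqIcc y).mono_set (Set.Icc_subset_Icc_left hx)
    have hadd : S x + ∫ t in x..y, q t = S y := by
      rw [hS, hS]; exact intervalIntegral.integral_add_adjacent_intervals I1 I2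
    have hnn : 0 ≤ ∫ t in x..y, q t :=
      intervalIntegral.integral_nonneg hxy (fun u hu => hq0 u (le_trans hx hu.1))
    linarith
  have hS0 : ∀ y, x₀ ≤ y → 0 ≤ S y := by
    intro y hy; rw [← hSx₀]; exact hSmono x₀ y le_rfl hy
  have hexpβ : ∀ {x y : ℝ}, x₀ ≤ x → x ≤ y →
      ‖NormedSpace.exp (-(S x - S y) • B)‖ ≤ β := by
    intro x y hx hxy
    rw [neg_sub]
    exact hB _ (sub_nonneg.2 (hSmono x y hx hxy))
  -- continuity helpers
  have hmv : ∀ {M : ℝ → Matrix (Fin d) (Fin d) ℂ} {v : ℝ → Fin d → ℂ} {s : Set ℝ},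
      ContinuousOn M s → ContinuousOn v s →
      ContinuousOn (fun y => (M y).mulVec (v y)) s := by
    intro M v s hM hv
    rw [continuousOn_iff_continuous_restrict] at *
    exact hM.matrix_mulVec hv
  have hexpScont : ∀ (f : ℝ → ℝ), ContinuousOn f (Set.Ici x₀) →
      ContinuousOn (fun y => NormedSpace.exp (f y • B)) (Set.Ici x₀) :=
    fun f hf => NormedSpace.exp_continuous.comp_continuousOn (hf.smul continuousOn_const)
  -- integrability of ‖A‖ * gᵐ
  have hAgm : ∀ m : ℕ, IntegrableOn (fun y => ‖A y‖ * g y ^ m) (Set.Ici x₀) := by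
    intro m
    apply Integrable.mono' (hAint.const_mul (g x₀ ^ m))
    · exact (hAnorm.mul (hgcont.pow m)).aestronglyMeasurable measurableSet_Ici
    · rw [ae_restrict_iff' measurableSet_Ici]
      refine Filter.Eventually.of_forall (fun y hy => ?_)
      rw [Real.norm_eq_abs, abs_of_nonneg (mul_nonneg (norm_nonneg _) (pow_nonneg (hg0 y) m)),
        mul_comm]
      exact mul_le_mul_of_nonneg_right
        (pow_le_pow_left₀ (hg0 y) (hganti x₀ y le_rfl hy) m) (norm_nonneg _)
  -- the key integral inequality
  have intlem : ∀ (m : ℕ) (x : ℝ), x₀ ≤ x →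
      (∫ y in Set.Ici x, ‖A y‖ * g y ^ m) ≤ g x ^ (m+1) / (m+1) := by
    intro m x hx
    have hgderiv : ∀ y ∈ Set.Ioi x₀, HasDerivAt g (-‖A y‖) y := by
      intro y hy
      have hnb : Set.Ici x₀ ∈ nhds y := Ici_mem_nhds hy
      have hP : HasDerivAt (fun u => ∫ t in x₀..u, ‖A t‖) ‖A y‖ y := by
        apply intervalIntegral.integral_hasDerivAt_right
        · rw [intervalIntegrable_iff_integrableOn_Icc_of_le (le_of_lt hy)]
          exact hAint.mono_set Set.Icc_subset_Ici_self
        · exact ⟨Set.Ici x₀, hnb, hAnorm.aestronglyMeasurable measurableSet_Ici⟩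
        · exact hAnorm.continuousAt hnb
      have h2 : HasDerivAt (fun u => g x₀ - ∫ t in x₀..u, ‖A t‖) (0 - ‖A y‖) y :=
        (hasDerivAt_const y (g x₀)).sub hP
      rw [zero_sub] at h2
      apply h2.congr_of_eventuallyEq
      filter_upwards [hnb] with u hu
      exact vob_integral_Ici_split _ hu hAint
    set F : ℝ → ℝ := fun y => -(g y ^ (m+1)) with hFdef
    have hF : ∀ y ∈ Set.Ioi x₀, HasDerivAt F ((m+1 : ℝ) * (‖A y‖ * g y ^ m)) y := by
      intro y hy
      have h1 : HasDerivAt F (-(↑(m + 1) * g y ^ (m + 1 - 1) * -‖A y‖)) y :=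
        ((hgderiv y hy).pow (m+1)).neg
      convert h1 using 1
      simp only [Nat.add_sub_cancel]
      push_cast; ring
    have hbound : ∀ T, x ≤ T →
        (∫ y in x..T, ‖A y‖ * g y ^ m) ≤ g x ^ (m+1) / (m+1) := by
      intro T hT
      have hIcc : IntegrableOn (fun y => (m+1 : ℝ) * (‖A y‖ * g y ^ m)) (Set.Icc x T) :=
        ((hAgm m).mono_set (fun y hy => le_trans hx hy.1)).const_mul _
      have heq : (∫ y in x..T, (m+1 : ℝ) * (‖A y‖ * g y ^ m)) = F T - F x := by
        apply intervalIntegral.integral_eq_sub_of_hasDeriv_right_of_le hT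
        · exact ((hgcont.mono (fun y hy => le_trans hx hy.1)).pow (m+1)).neg
        · intro y hy
          exact (hF y (Set.mem_Ioi.2 (lt_of_le_of_lt hx hy.1))).hasDerivWithinAt
        · rw [intervalIntegrable_iff_integrableOn_Icc_of_le hT]; exact hIcc
      have heq2 : (m+1 : ℝ) * ∫ y in x..T, ‖A y‖ * g y ^ m = F T - F x := by
        rw [← heq, intervalIntegral.integral_const_mul]
      have hFT : F T - F x ≤ g x ^ (m+1) := by
        have := pow_nonneg (hg0 T) (m+1)
        simp only [hFdef]
        linarith
      have h3 : (m+1 : ℝ) * ∫ y in x..T, ‖A y‖ * g y ^ m ≤ g x ^ (m+1) := by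
        rw [heq2]; exact hFT
      exact (le_div_iff₀' (by positivity : (0:ℝ) < (m+1:ℝ))).2 h3
    have hint2 : IntegrableOn (fun y => ‖A y‖ * g y ^ m) (Set.Ioi x) :=
      (hAgm m).mono_set (fun y hy => le_trans hx (le_of_lt hy))
    have hlim := MeasureTheory.intervalIntegral_tendsto_integral_Ioi x hint2 Filter.tendsto_id
    rw [integral_Ici_eq_integral_Ioi]
    exact le_of_tendsto hlim (Filter.eventually_atTop.2 ⟨x, hbound⟩)
  -- main structural lemma about K applied to a function with a g-power bound
  have key : ∀ (V : ℝ → Fin d → ℂ) (c : ℝ) (m : ℕ), ContinuousOn V (Set.Ici x₀) → 0 ≤ c →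
      (∀ y ∈ Set.Ici x₀, ‖V y‖ ≤ c * g y ^ m) →
      (∀ x ∈ Set.Ici x₀, IntegrableOn
        (fun y => (NormedSpace.exp (-(S x - S y) • B)).mulVec
          ((A y).mulVec (V y))) (Set.Ici x)) ∧
      ContinuousOn (K V) (Set.Ici x₀) ∧
      ∀ x ∈ Set.Ici x₀, ‖K V x‖ ≤ β * c * (g x ^ (m+1) / (m+1)) := by
    intro V c m hVcont hc hVb
    have hnormbd : ∀ x, x₀ ≤ x → ∀ y ∈ Set.Ici x,
        ‖(NormedSpace.exp (-(S x - S y) • B)).mulVec ((A y).mulVec (V y))‖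
          ≤ β * c * (‖A y‖ * g y ^ m) := by
      intro x hx y hy
      have hy₀ : x₀ ≤ y := le_trans hx hy
      refine le_trans (Matrix.linfty_opNorm_mulVec _ _) ?_
      have h2 : ‖(A y).mulVec (V y)‖ ≤ ‖A y‖ * (c * g y ^ m) :=
        le_trans (Matrix.linfty_opNorm_mulVec _ _)
          (mul_le_mul_of_nonneg_left (hVb y hy₀) (norm_nonneg _))
      calc ‖NormedSpace.exp (-(S x - S y) • B)‖ * ‖(A y).mulVec (V y)‖
          ≤ β * (‖A y‖ * (c * g y ^ m)) :=
            mul_le_mul (hexpβ hx hy) h2 (norm_nonneg _) hβ.le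
        _ = β * c * (‖A y‖ * g y ^ m) := by ring
    have hcont_int : ∀ x : ℝ, ContinuousOn
        (fun y => (NormedSpace.exp (-(S x - S y) • B)).mulVec ((A y).mulVec (V y)))
        (Set.Ici x₀) :=
      fun x => hmv (hexpScont (fun y => -(S x - S y))
        ((continuousOn_const.sub hScont).neg)) (hmv hA hVcont)
    have hInt : ∀ x ∈ Set.Ici x₀, IntegrableOn
        (fun y => (NormedSpace.exp (-(S x - S y) • B)).mulVec
          ((A y).mulVec (V y))) (Set.Ici x) := by
      intro x hx
      apply Integrable.mono'
        (((hAgm m).mono_set (Set.Ici_subset_Ici.2 hx)).const_mul (β*c))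
      · exact ((hcont_int x).mono (Set.Ici_subset_Ici.2 hx)).aestronglyMeasurable
          measurableSet_Ici
      · rw [ae_restrict_iff' measurableSet_Ici]
        exact Filter.Eventually.of_forall (hnormbd x hx)
    refine ⟨hInt, ?_, ?_⟩
    · -- continuity of K V
      have hhint : IntegrableOn
          (fun y => (NormedSpace.exp (S y • B)).mulVec ((A y).mulVec (V y)))
          (Set.Ici x₀) := by
        have h := hInt x₀ Set.self_mem_Ici
        simp only [hSx₀, zero_sub, neg_neg] at h
        exact h
      have hW : ContinuousOn
          (fun x => ∫ y in Set.Ici x,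
            (NormedSpace.exp (S y • B)).mulVec ((A y).mulVec (V y))) (Set.Ici x₀) :=
        vob_contOn_integral_Ici hhint
      have hfac : ∀ x ∈ Set.Ici x₀, K V x =
          (NormedSpace.exp ((-S x) • B)).mulVec
            (∫ y in Set.Ici x,
              (NormedSpace.exp (S y • B)).mulVec ((A y).mulVec (V y))) := by
        intro x hx
        rw [hK]
        have hsplit : ∀ y : ℝ, NormedSpace.exp (-(S x - S y) • B)
            = NormedSpace.exp ((-S x) • B) * NormedSpace.exp (S y • B) := by
          intro y
          erw [← NormedSpace.exp_add_of_commute (((Commute.refl B).smul_left (-S x)).smul_right (S y))]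
          congr 1
          rw [← add_smul]
          congr 1
          ring
        have heq : ∀ y : ℝ,
            (NormedSpace.exp (-(S x - S y) • B)).mulVec ((A y).mulVec (V y))
            = (NormedSpace.exp ((-S x) • B)).mulVec
                ((NormedSpace.exp (S y • B)).mulVec ((A y).mulVec (V y))) := by
          intro y
          rw [hsplit y, ← Matrix.mulVec_mulVec]
        simp_rw [heq]
        set L : (Fin d → ℂ) →L[ℂ] (Fin d → ℂ) :=
          LinearMap.toContinuousLinearMap
            (Matrix.mulVecLin (NormedSpace.exp ((-S x) • B))) with hL
        have hLapp : ∀ v : Fin d → ℂ,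
            L v = (NormedSpace.exp ((-S x) • B)).mulVec v := by
          intro v
          rw [hL, LinearMap.coe_toContinuousLinearMap', Matrix.mulVecLin_apply]
        rw [← hLapp]
        simp_rw [← hLapp]
        exact ContinuousLinearMap.integral_comp_comm L
          (hhint.mono_set (Set.Ici_subset_Ici.2 hx))
      refine ContinuousOn.congr ?_ hfac
      exact hmv (hexpScont (fun x => -S x) hScont.neg) hW
    · -- the norm bound
      intro x hx
      rw [hK]
      calc ‖∫ y in Set.Ici x, (NormedSpace.exp (-(S x - S y) • B)).mulVec
              ((A y).mulVec (V y))‖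
          ≤ ∫ y in Set.Ici x, ‖(NormedSpace.exp (-(S x - S y) • B)).mulVec
              ((A y).mulVec (V y))‖ := norm_integral_le_integral_norm _
        _ ≤ ∫ y in Set.Ici x, β * c * (‖A y‖ * g y ^ m) := by
            apply setIntegral_mono_on ((hInt x hx).norm)
              (((hAgm m).mono_set (Set.Ici_subset_Ici.2 hx)).const_mul (β*c))
              measurableSet_Ici
            exact hnormbd x hx
        _ = β * c * ∫ y in Set.Ici x, ‖A y‖ * g y ^ m := by
            rw [integral_const_mul]
        _ ≤ β * c * (g x ^ (m+1) / (m+1)) :=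
            mul_le_mul_of_nonneg_left (intlem m x hx) (mul_nonneg hβ.le hc)
  -- the supremum of ‖U‖
  set C : ℝ := ⨆ x : Set.Ici x₀, ‖U (x : ℝ)‖ with hCdef
  have hbdd : BddAbove (Set.range fun x : Set.Ici x₀ => ‖U (x : ℝ)‖) := by
    obtain ⟨C₀, hC₀⟩ := hUbd
    refine ⟨C₀, ?_⟩
    rintro _ ⟨x, rfl⟩
    exact hC₀ x x.2
  have hUC : ∀ x ∈ Set.Ici x₀, ‖U x‖ ≤ C := fun x hx => le_ciSup hbdd ⟨x, hx⟩
  have hC0 : 0 ≤ C := le_trans (norm_nonneg (U x₀)) (hUC x₀ Set.self_mem_Ici)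
  have k0 := key U C 0 hUcont hC0 (fun y hy => by simpa using hUC y hy)
  -- the iterates bound
  have iter : ∀ n : ℕ, ContinuousOn (K^[n] U) (Set.Ici x₀) ∧
      ∀ x ∈ Set.Ici x₀, ‖(K^[n] U) x‖ ≤ (C * β ^ n / n.factorial) * g x ^ n := by
    intro n
    induction n with
    | zero =>
      refine ⟨by simpa using hUcont, fun x hx => ?_⟩
      simpa using hUC x hx
    | succ n ih =>
      have hc' : 0 ≤ C * β ^ n / n.factorial := by positivity
      have k := key (K^[n] U) (C * β ^ n / n.factorial) n ih.1 hc' ih.2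
      constructor
      · rw [Function.iterate_succ_apply']
        exact k.2.1
      · intro x hx
        rw [Function.iterate_succ_apply']
        refine le_trans (k.2.2 x hx) (le_of_eq ?_)
        rw [Nat.factorial_succ]
        have h1 : ((n.factorial : ℝ)) ≠ 0 := Nat.cast_ne_zero.2 (Nat.factorial_ne_zero n)
        have h2 : ((n:ℝ) + 1) ≠ 0 := by positivity
        push_cast
        field_simp
        ring
  refine ⟨k0.1, k0.2.1, ⟨β * C * g x₀, fun x hx => ?_⟩, ?_⟩
  · have h := k0.2.2 x hx
    norm_num at h
    exact le_trans h
      (mul_le_mul_of_nonneg_left (hganti x₀ x le_rfl hx) (mul_nonneg hβ.le hC0))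
  · intro n hn
    apply ciSup_le
    rintro ⟨x, hx⟩
    have h1 := (iter n).2 x hx
    refine le_trans h1 ?_
    have h2 : (C * β ^ n / n.factorial) * g x ^ n = ((β * g x) ^ n / n.factorial) * C := by
      rw [mul_pow]; ring
    rw [h2]
    have h3 : (β * g x) ^ n ≤ ρ ^ n :=
      pow_le_pow_left₀ (mul_nonneg hβ.le (hg0 x)) (hβg x hx) n
    exact mul_le_mul_of_nonneg_right
      ((div_le_div_iff_of_pos_right (by positivity)).2 h3) hC0
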